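/- Assume 0 < σ < 1, 0 < δ < 1, 2σ+1 < δ_u < 3 and max{2, 2δ+1} < δ_b < 3. Suppose that for each q ≥ −1 the functions a^u_q, G^u_q, a^b_q, G^b_q : [t₀, t₀+T] → [0,∞) are measurable, that the Bernstein-type bounds G^u_q(t) ≤ C_B Σ_{p=−1}^{q} λ_p a^u_p(t) and G^b_q(t) ≤ C_B Σ_{p=−1}^{q} λ_p^{1+3/r} a^b_p(t) hold for every q and every t, that the functions t ↦ Λ_u(t) and t ↦ Λ_b(t) (the abstract velocity and magnetic determining wavenumbers computed from (a^u(·,t), G^u(·,t)) and (a^b(·,t), G^b(·,t)) respectively) are measurable, and that e^u_q, e^b_q : [t₀, t₀+T] → [0,∞) are measurable with ⟨Σ_{q≥−1} λ_q² e^u_q⟩ < ∞ and ⟨Σ_{q≥−1} λ_q² e^b_q⟩ < ∞. Assume the intermittency relations ⟨Σ_{q≥−1} λ_q^{−1+δ_u} (a^u_q)²⟩ ≤ C_I ⟨Σ_{q≥−1} λ_q² e^u_q⟩ and ⟨Σ_{q≥−1} λ_q^{−1+δ_b+6/r} (a^b_q)²⟩ ≤ C_I ⟨Σ_{q≥−1}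 λ_q² e^b_q⟩ for some C_I > 0. Define ε_u := ν⟨Σ_{q≥−1} λ_q² e^u_q⟩, κ_u := (ε_u/ν³)^{1/(1+δ_u)}, ε_b := μ⟨Σ_{q≥−1} λ_q² e^b_q⟩, and κ_e := (ε_b/μ³)^{1/(δ_b−1)}. Then there exists a constant C, depending only on L, r, c, σ, δ, δ_u, δ_b, C_B and C_I, such that ⟨Λ_u⟩ ≤ 1 + C·κ_u and ⟨Λ_b⟩ ≤ 1 + C·κ_e. -/

import Mathlib

open MeasureTheory
open scoped ENNReal

/-- The admissibility condition at level `q` in the definition of the abstract velocity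
determining wavenumber (`λ_q = 2^q`): `(L λ_{p-q})^σ λ_q^{-1} a_p < c ν` for every
integer `p > q`, and `λ_q^{-2} G_q < c ν`. -/
def GoodU (L c ν σ : ℝ) (a G : ℤ → ℝ) (q : ℕ) : Prop :=
  (∀ p : ℤ, (q : ℤ) < p →
      (L * (2:ℝ) ^ (p - (q : ℤ))) ^ σ * ((2:ℝ) ^ (q : ℤ))⁻¹ * a p < c * ν) ∧
    (((2:ℝ) ^ (q : ℤ)) ^ 2)⁻¹ * G q < c * ν

/-- The abstract velocity determining wavenumber `Λ_u = λ_Q = 2^Q`, where `Q` is the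
least admissible natural number; `Λ_u = ∞` if no natural number is admissible. -/
noncomputable def LambdaU (L c ν σ : ℝ) (a G : ℤ → ℝ) : ℝ≥0∞ :=
  sInf {x : ℝ≥0∞ | ∃ q : ℕ, GoodU L c ν σ a G q ∧ x = 2 ^ q}

/-- The admissibility condition at level `q` in the definition of the abstract magnetic
determining wavenumber (`λ_q = 2^q`): `(L λ_{p-q})^δ λ_p^{3/r} a_p < c μ` for every
integer `p > q`, and `λ_q^{-1} G_q < c μ`. -/
def GoodB (L c μ r δ : ℝ) (a G : ℤ → ℝ) (q : ℕ) : Prop :=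
  (∀ p : ℤ, (q : ℤ) < p →
      (L * (2:ℝ) ^ (p - (q : ℤ))) ^ δ * ((2:ℝ) ^ p) ^ (3 / r) * a p < c * μ) ∧
    ((2:ℝ) ^ (q : ℤ))⁻¹ * G q < c * μ

/-- The abstract magnetic determining wavenumber `Λ_b = λ_Q = 2^Q`, where `Q` is the
least admissible natural number; `Λ_b = ∞` if no natural number is admissible. -/
noncomputable def LambdaB (L c μ r δ : ℝ) (a G : ℤ → ℝ) : ℝ≥0∞ :=
  sInf {x : ℝ≥0∞ | ∃ q : ℕ, GoodB L c μ r δ a G q ∧ x = 2 ^ q}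

/-- Time average `⟨f⟩ = (1/T) ∫_{t₀}^{t₀+T} f` of an `ℝ≥0∞`-valued function. -/
noncomputable def timeAvg (t₀ T : ℝ) (f : ℝ → ℝ≥0∞) : ℝ≥0∞ :=
  (∫⁻ t in Set.Icc t₀ (t₀ + T), f t) / ENNReal.ofReal T

/-- Sum over dyadic indices `q ≥ -1` of an `ℝ≥0∞`-valued quantity. -/
noncomputable def sumQ (F : ℤ → ℝ≥0∞) : ℝ≥0∞ :=
  ∑' n : ℕ, F ((n : ℤ) - 1)

lemma aux_sum_le_sumQ (F : ℤ → ℝ≥0∞) (s : Finset ℤ) (hs : ∀ p ∈ s, -1 ≤ p) :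
    ∑ p ∈ s, F p ≤ sumQ F := by
  have h1 : ∑ p ∈ s, F p = ∑ n ∈ (s.image (fun p => (p + 1).toNat) : Finset ℕ), F ((n : ℕ) - 1 : ℤ) := by
    rw [Finset.sum_image]
    · apply Finset.sum_congr rfl
      intro p hp
      have : ((p + 1).toNat : ℤ) = p + 1 := Int.toNat_of_nonneg (by linarith [hs p hp])
      rw [this]; ring_nf
    · intro p hp q hq h
      have hp' : ((p + 1).toNat : ℤ) = p + 1 := Int.toNat_of_nonneg (by linarith [hs p hp])
      have hq' : ((q + 1).toNat : ℤ) = q + 1 := Int.toNat_of_nonneg (by linarith [hs q hq])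
      simp only at h
      omega
  rw [h1, sumQ]
  exact ENNReal.sum_le_tsum (f := fun n : ℕ => F ((n:ℤ) - 1)) _

lemma aux_le_sumQ (F : ℤ → ℝ≥0∞) (p : ℤ) (hp : -1 ≤ p) : F p ≤ sumQ F := by
  simpa using aux_sum_le_sumQ F {p} (by simpa using hp)

lemma aux_core (Good : ℕ → Prop) [DecidablePred Good] (B : ℝ≥0∞)
    (hbad : ∀ q : ℕ, ¬ Good q → (2 : ℝ≥0∞) ^ q ≤ B) :
    sInf {x : ℝ≥0∞ | ∃ q : ℕ, Good q ∧ x = 2 ^ q} ≤ 1 + 2 * B := by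
  by_cases h : ∃ q, Good q
  · have hfind := Nat.find_spec h
    have hle : sInf {x : ℝ≥0∞ | ∃ q : ℕ, Good q ∧ x = 2 ^ q} ≤ 2 ^ (Nat.find h) :=
      sInf_le ⟨Nat.find h, hfind, rfl⟩
    rcases Nat.eq_zero_or_pos (Nat.find h) with h0 | h0
    · rw [h0] at hle
      simpa using hle.trans (by simp : (2:ℝ≥0∞)^0 ≤ 1 + 2 * B)
    · obtain ⟨n, hn⟩ := Nat.exists_eq_succ_of_ne_zero h0.ne'
      have hbadn : ¬ Good n := Nat.find_min h (by omega)
      have h2 : (2:ℝ≥0∞) ^ n ≤ B := hbad n hbadn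
      calc sInf {x : ℝ≥0∞ | ∃ q : ℕ, Good q ∧ x = 2 ^ q} ≤ 2 ^ (Nat.find h) := hle
        _ = 2 * 2 ^ n := by rw [hn, pow_succ, mul_comm]
        _ ≤ 2 * B := by exact mul_le_mul_right h2 2
        _ ≤ 1 + 2 * B := le_add_self
  · have hB : B = ⊤ := by
      by_contra hB
      obtain ⟨n, hn⟩ := ENNReal.exists_nat_gt hB
      have h1 : (n : ℝ≥0∞) ≤ 2 ^ n := by
        have : (n : ℕ) ≤ 2 ^ n := (Nat.lt_two_pow_self).le
        exact_mod_cast Nat.cast_le.2 this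
      exact absurd (h1.trans (hbad n (fun hg => h ⟨n, hg⟩))) (not_le.2 hn)
    rw [hB]
    simp

lemma timeAvg_mono (t₀ T : ℝ) (f g : ℝ → ℝ≥0∞)
    (h : ∀ t ∈ Set.Icc t₀ (t₀ + T), f t ≤ g t) :
    timeAvg t₀ T f ≤ timeAvg t₀ T g := by
  apply ENNReal.div_le_div_right
  exact lintegral_mono_ae ((ae_restrict_iff' measurableSet_Icc).2 (Filter.Eventually.of_forall h))

lemma timeAvg_const_one (t₀ T : ℝ) (hT : 0 < T) :
    timeAvg t₀ T (fun _ => 1) = 1 := by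
  rw [timeAvg, lintegral_const, Measure.restrict_apply_univ, Real.volume_Icc]
  simp only [add_sub_cancel_left, one_mul]
  exact ENNReal.div_self (by simp [ENNReal.ofReal_eq_zero]; linarith) (by simp)

lemma timeAvg_add (t₀ T : ℝ) (f g : ℝ → ℝ≥0∞) (hf : Measurable f) :
    timeAvg t₀ T (fun t => f t + g t) = timeAvg t₀ T f + timeAvg t₀ T g := by
  rw [timeAvg, lintegral_add_left hf, ENNReal.add_div]; rfl

lemma timeAvg_const_mul (t₀ T : ℝ) (cc : ℝ≥0∞) (f : ℝ → ℝ≥0∞) (hf : Measurable f) :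
    timeAvg t₀ T (fun t => cc * f t) = cc * timeAvg t₀ T f := by
  rw [timeAvg, lintegral_const_mul cc hf, timeAvg, div_eq_mul_inv,
    div_eq_mul_inv, mul_assoc]

lemma timeAvg_jensen (t₀ T : ℝ) (hT : 0 < T) (h : ℝ → ℝ≥0∞) (hm : Measurable h)
    (e : ℝ) (he0 : 0 < e) (he1 : e < 1) :
    timeAvg t₀ T (fun t => h t ^ e) ≤ (timeAvg t₀ T h) ^ e := by
  set μ := volume.restrict (Set.Icc t₀ (t₀ + T)) with hμ
  have hpq : Real.HolderConjugate e⁻¹ (1 - e)⁻¹ := by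
    rw [Real.holderConjugate_iff]
    constructor
    · exact (one_lt_inv₀ he0).2 he1
    · rw [inv_inv, inv_inv]; ring
  have hold := ENNReal.lintegral_mul_le_Lp_mul_Lq μ hpq
    (f := fun t => h t ^ e) (g := fun _ => 1)
    ((hm.pow_const e).aemeasurable) aemeasurable_const
  have hτ0 : ENNReal.ofReal T ≠ 0 := by simp [ENNReal.ofReal_eq_zero]; linarith
  have hτt : ENNReal.ofReal T ≠ ⊤ := ENNReal.ofReal_ne_top
  have h1 : ∫⁻ t, h t ^ e ∂μ ≤ (∫⁻ t, h t ∂μ) ^ e * (ENNReal.ofReal T) ^ (1 - e) := by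
    have he' : (e : ℝ) ≠ 0 := he0.ne'
    simp only [Pi.mul_apply, mul_one, ENNReal.rpow_rpow_inv he', ENNReal.one_rpow,
      one_div, inv_inv, lintegral_const, Measure.restrict_apply_univ, Real.volume_Icc,
      add_sub_cancel_left] at hold
    rw [one_mul, hμ, Measure.restrict_apply_univ, Real.volume_Icc, add_sub_cancel_left] at hold
    exact hold
  have h2 : (ENNReal.ofReal T) ^ (1 - e) / ENNReal.ofReal T = ((ENNReal.ofReal T) ^ e)⁻¹ := by
    rw [div_eq_mul_inv, ← ENNReal.rpow_neg_one (ENNReal.ofReal T),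
      ← ENNReal.rpow_add _ _ hτ0 hτt]
    rw [show (1 - e + -1 : ℝ) = -e by ring, ENNReal.rpow_neg]
  calc timeAvg t₀ T (fun t => h t ^ e)
      ≤ ((∫⁻ t, h t ∂μ) ^ e * (ENNReal.ofReal T) ^ (1 - e)) / ENNReal.ofReal T := by
        exact ENNReal.div_le_div_right h1 _
    _ = (∫⁻ t, h t ∂μ) ^ e * ((ENNReal.ofReal T) ^ (1 - e) / ENNReal.ofReal T) := by
        rw [div_eq_mul_inv, div_eq_mul_inv, mul_assoc]
    _ = (∫⁻ t, h t ∂μ) ^ e / (ENNReal.ofReal T) ^ e := by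
        rw [h2, div_eq_mul_inv]
    _ = (timeAvg t₀ T h) ^ e := by
        rw [timeAvg, ENNReal.div_rpow_of_nonneg _ _ he0.le]

lemma two_zpow_eq_rpow (p : ℤ) : (2:ℝ) ^ p = (2:ℝ) ^ ((p : ℤ) : ℝ) :=
  (Real.rpow_intCast 2 p).symm

lemma two_zpow_rpow (p : ℤ) (θ : ℝ) : ((2:ℝ) ^ p) ^ θ = (2:ℝ) ^ (((p : ℤ) : ℝ) * θ) := by
  rw [two_zpow_eq_rpow, ← Real.rpow_mul (by norm_num : (0:ℝ) ≤ 2)]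

lemma two_rpow_pos (x : ℝ) : (0:ℝ) < 2 ^ x := Real.rpow_pos_of_pos (by norm_num) x

-- geometric sum bound
lemma aux_geom (β : ℝ) (hβ : 0 < β) (q : ℕ) :
    ∑ p ∈ Finset.Icc (-1 : ℤ) (q : ℤ), (2:ℝ) ^ ((p : ℝ) * β)
      ≤ (1 - 2 ^ (-β))⁻¹ * 2 ^ ((q : ℝ) * β) := by
  have hR0 : (0:ℝ) ≤ 2 ^ (-β) := (two_rpow_pos _).le
  have hR1 : (2:ℝ) ^ (-β) < 1 := by
    rw [← Real.rpow_zero 2]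
    exact Real.rpow_lt_rpow_left_iff (by norm_num) |>.2 (by linarith)
  have himg : Finset.Icc (-1 : ℤ) (q : ℤ) =
      (Finset.range (q + 2)).image (fun j : ℕ => (q : ℤ) - (j : ℤ)) := by
    ext p
    simp only [Finset.mem_Icc, Finset.mem_image, Finset.mem_range]
    constructor
    · rintro ⟨h1, h2⟩
      exact ⟨((q : ℤ) - p).toNat, by omega, by omega⟩
    · rintro ⟨j, hj, rfl⟩
      omega
  rw [himg, Finset.sum_image (by intro a _ b _ h; simp only at h; omega)]
  have hterm : ∀ j : ℕ, (2:ℝ) ^ ((((q : ℤ) - j : ℤ) : ℝ) * β)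
      = 2 ^ ((q : ℝ) * β) * ((2:ℝ) ^ (-β)) ^ j := by
    intro j
    rw [← Real.rpow_natCast ((2:ℝ) ^ (-β)) j, ← Real.rpow_mul (by norm_num : (0:ℝ) ≤ 2),
      ← Real.rpow_add (by norm_num : (0:ℝ) < 2)]
    push_cast
    ring_nf
  rw [Finset.sum_congr rfl (fun j _ => hterm j), ← Finset.mul_sum]
  have hgs : ∑ j ∈ Finset.range (q + 2), ((2:ℝ) ^ (-β)) ^ j ≤ (1 - 2 ^ (-β))⁻¹ := by
    rw [← tsum_geometric_of_lt_one hR0 hR1]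
    exact Summable.sum_le_tsum _ (fun i _ => pow_nonneg hR0 i) (summable_geometric_of_lt_one hR0 hR1)
  rw [mul_comm ((1 - 2 ^ (-β))⁻¹ : ℝ) _]
  exact mul_le_mul_of_nonneg_left hgs (two_rpow_pos _).le


lemma rpow_add2 (x y : ℝ) : (2:ℝ) ^ x * (2:ℝ) ^ y = 2 ^ (x + y) :=
  (Real.rpow_add (by norm_num) x y).symm

lemma rpow_sq (x : ℝ) : ((2:ℝ) ^ x) ^ 2 = 2 ^ (2 * x) := by
  rw [sq, rpow_add2]; ring_nf

lemma aux_caseB (CB cν : ℝ) (hCB : 0 < CB) (hcν : 0 < cν)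
    (γ w θ : ℝ) (hβ : 0 < 2 * w - θ)
    (a : ℤ → ℝ) (q : ℕ)
    (hyp : cν * 2 ^ ((q : ℝ) * γ) ≤
      CB * ∑ p ∈ Finset.Icc (-1:ℤ) (q:ℤ), (2:ℝ) ^ ((p:ℝ) * w) * a p) :
    cν ^ 2 * (1 - 2 ^ (-(2*w - θ))) / CB ^ 2 * 2 ^ ((q:ℝ) * (2*γ - (2*w - θ)))
      ≤ ∑ p ∈ Finset.Icc (-1:ℤ) (q:ℤ), (2:ℝ) ^ ((p:ℝ) * θ) * a p ^ 2 := by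
  set β : ℝ := 2 * w - θ with hβdef
  set s := Finset.Icc (-1:ℤ) (q:ℤ) with hs
  set S3 : ℝ := ∑ p ∈ s, (2:ℝ) ^ ((p:ℝ) * θ) * a p ^ 2 with hS3
  have hS30 : 0 ≤ S3 :=
    Finset.sum_nonneg fun p _ => mul_nonneg (two_rpow_pos _).le (sq_nonneg _)
  have hD0 : (0:ℝ) < 1 - 2 ^ (-β) := by
    have : (2:ℝ) ^ (-β) < 1 := by
      rw [← Real.rpow_zero 2]
      exact Real.rpow_lt_rpow_left_iff (by norm_num) |>.2 (by linarith)
    linarith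
  -- Cauchy–Schwarz
  have hCS : (∑ p ∈ s, (2:ℝ) ^ ((p:ℝ) * w) * a p) ^ 2 ≤
      (∑ p ∈ s, (2:ℝ) ^ ((p:ℝ) * β)) * S3 := by
    have h1 : ∀ p ∈ s, (2:ℝ) ^ ((p:ℝ) * w) * a p =
        ((2:ℝ) ^ ((p:ℝ) * (β/2))) * ((2:ℝ) ^ ((p:ℝ) * (θ/2)) * a p) := by
      intro p _
      rw [← mul_assoc, rpow_add2]
      congr 2
      ring
    have h2 : ∀ p ∈ s, (2:ℝ) ^ ((p:ℝ) * β) = ((2:ℝ) ^ ((p:ℝ) * (β/2))) ^ 2 := by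
      intro p _
      rw [rpow_sq]; ring_nf
    have h3 : ∀ p ∈ s, (2:ℝ) ^ ((p:ℝ) * θ) * a p ^ 2 =
        ((2:ℝ) ^ ((p:ℝ) * (θ/2)) * a p) ^ 2 := by
      intro p _
      rw [mul_pow, rpow_sq]; ring_nf
    rw [Finset.sum_congr rfl h1, Finset.sum_congr rfl h2, hS3, Finset.sum_congr rfl h3]
    exact Finset.sum_mul_sq_le_sq_mul_sq s _ _
  have hgeo := aux_geom β hβ q
  have hL0 : 0 ≤ cν * 2 ^ ((q : ℝ) * γ) := by positivity
  have key : (cν * 2 ^ ((q : ℝ) * γ)) ^ 2 ≤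
      CB ^ 2 * ((1 - 2 ^ (-β))⁻¹ * 2 ^ ((q:ℝ) * β)) * S3 := by
    calc (cν * 2 ^ ((q : ℝ) * γ)) ^ 2
        ≤ (CB * ∑ p ∈ s, (2:ℝ) ^ ((p:ℝ) * w) * a p) ^ 2 := by
          apply pow_le_pow_left₀ hL0 hyp
      _ = CB ^ 2 * (∑ p ∈ s, (2:ℝ) ^ ((p:ℝ) * w) * a p) ^ 2 := by ring
      _ ≤ CB ^ 2 * ((∑ p ∈ s, (2:ℝ) ^ ((p:ℝ) * β)) * S3) := by
          exact mul_le_mul_of_nonneg_left hCS (by positivity)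
      _ ≤ CB ^ 2 * ((1 - 2 ^ (-β))⁻¹ * 2 ^ ((q:ℝ) * β) * S3) := by
          apply mul_le_mul_of_nonneg_left _ (by positivity)
          exact mul_le_mul_of_nonneg_right hgeo hS30
      _ = CB ^ 2 * ((1 - 2 ^ (-β))⁻¹ * 2 ^ ((q:ℝ) * β)) * S3 := by ring
  have hsplit : (2:ℝ) ^ ((q:ℝ) * (2 * γ)) = 2 ^ ((q:ℝ) * (2*γ - β)) * 2 ^ ((q:ℝ) * β) := by
    rw [rpow_add2]; ring_nf
  have hY : (0:ℝ) < 2 ^ ((q:ℝ) * β) := two_rpow_pos _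
  have hX : (0:ℝ) < 2 ^ ((q:ℝ) * (2*γ - β)) := two_rpow_pos _
  have key2 : cν ^ 2 * (2 ^ ((q:ℝ) * (2*γ - β)) * 2 ^ ((q:ℝ) * β)) ≤
      CB ^ 2 * ((1 - 2 ^ (-β))⁻¹ * 2 ^ ((q:ℝ) * β)) * S3 := by
    calc cν ^ 2 * (2 ^ ((q:ℝ) * (2*γ - β)) * 2 ^ ((q:ℝ) * β))
        = (cν * 2 ^ ((q : ℝ) * γ)) ^ 2 := by
          rw [mul_pow, ← hsplit, rpow_sq]; ring_nf
      _ ≤ _ := key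
  have k1 : cν ^ 2 * 2 ^ ((q:ℝ) * (2*γ - β)) ≤ CB ^ 2 * (1 - 2 ^ (-β))⁻¹ * S3 := by
    have := key2
    nlinarith [hY]
  calc cν ^ 2 * (1 - 2 ^ (-β)) / CB ^ 2 * 2 ^ ((q:ℝ) * (2*γ - β))
      = (cν ^ 2 * 2 ^ ((q:ℝ) * (2*γ - β))) * ((1 - 2 ^ (-β)) / CB ^ 2) := by ring
    _ ≤ (CB ^ 2 * (1 - 2 ^ (-β))⁻¹ * S3) * ((1 - 2 ^ (-β)) / CB ^ 2) := by
        exact mul_le_mul_of_nonneg_right k1 (by positivity)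
    _ = S3 := by
        field_simp

lemma aux_caseA (Lc cν σ' θ E xx yα : ℝ) (hL : 1 ≤ Lc) (hcν : 0 < cν) (ap : ℝ)
    (hyp2 : cν * 2 ^ E ≤ Lc ^ σ' * ap)
    (hE : yα ≤ θ * xx + 2 * E) :
    cν ^ 2 / Lc ^ (2*σ') * 2 ^ yα ≤ 2 ^ (xx * θ) * ap ^ 2 := by
  have hL0 : (0:ℝ) < Lc := lt_of_lt_of_le one_pos hL
  have hL2 : (0:ℝ) < Lc ^ (2*σ') := Real.rpow_pos_of_pos hL0 _
  have h2 : (Lc ^ σ') ^ 2 = Lc ^ (2*σ') := by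
    rw [← Real.rpow_natCast (Lc ^ σ') 2, ← Real.rpow_mul hL0.le]
    norm_num
    ring_nf
  have h1 : cν ^ 2 * 2 ^ (2*E) ≤ Lc ^ (2*σ') * ap ^ 2 := by
    have := pow_le_pow_left₀ (by positivity) hyp2 2
    rw [mul_pow, mul_pow, h2, rpow_sq] at this
    exact this
  have h3 : cν ^ 2 / Lc ^ (2*σ') * 2 ^ (2*E) ≤ ap ^ 2 := by
    rw [div_mul_eq_mul_div, div_le_iff₀ hL2]
    nlinarith [h1]
  calc cν ^ 2 / Lc ^ (2*σ') * 2 ^ yα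
      ≤ cν ^ 2 / Lc ^ (2*σ') * 2 ^ (θ * xx + 2 * E) := by
        apply mul_le_mul_of_nonneg_left _ (by positivity)
        exact Real.rpow_le_rpow_left_iff (by norm_num) |>.2 hE
    _ = 2 ^ (xx * θ) * (cν ^ 2 / Lc ^ (2*σ') * 2 ^ (2*E)) := by
        rw [← rpow_add2 (θ * xx) (2*E)]
        ring_nf
    _ ≤ 2 ^ (xx * θ) * ap ^ 2 :=
        mul_le_mul_of_nonneg_left h3 (two_rpow_pos _).le

lemma aux_conv (ν Ku α : ℝ) (hν : 0 < ν) (hKu : 0 < Ku) (hα : 0 < α) (S : ℝ≥0∞) (q : ℕ)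
    (h : ENNReal.ofReal (ν ^ 2 * 2 ^ ((q:ℝ) * α) / Ku) ≤ S) :
    (2:ℝ≥0∞) ^ q ≤ (ENNReal.ofReal Ku * S / (ENNReal.ofReal ν) ^ 2) ^ (α⁻¹ : ℝ) := by
  have hν2 : (ENNReal.ofReal ν) ^ 2 = ENNReal.ofReal (ν ^ 2) := (ENNReal.ofReal_pow hν.le 2).symm
  have hν2ne : ENNReal.ofReal (ν ^ 2) ≠ 0 := by
    simp [ENNReal.ofReal_eq_zero]; nlinarith
  have h1 : ENNReal.ofReal (2 ^ ((q:ℝ) * α)) ≤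
      ENNReal.ofReal Ku * S / (ENNReal.ofReal ν) ^ 2 := by
    have e1 : ENNReal.ofReal Ku * ENNReal.ofReal (ν ^ 2 * 2 ^ ((q:ℝ) * α) / Ku) =
        ENNReal.ofReal (ν ^ 2) * ENNReal.ofReal (2 ^ ((q:ℝ) * α)) := by
      rw [← ENNReal.ofReal_mul hKu.le, ← ENNReal.ofReal_mul (by positivity)]
      congr 1
      field_simp
    calc ENNReal.ofReal (2 ^ ((q:ℝ) * α))
        = ENNReal.ofReal Ku * ENNReal.ofReal (ν ^ 2 * 2 ^ ((q:ℝ) * α) / Ku) /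
            (ENNReal.ofReal ν) ^ 2 := by
          rw [e1, hν2, mul_comm, mul_div_assoc,
            ENNReal.mul_div_cancel hν2ne ENNReal.ofReal_ne_top]
      _ ≤ ENNReal.ofReal Ku * S / (ENNReal.ofReal ν) ^ 2 :=
          ENNReal.div_le_div_right (mul_le_mul_right h _) _
  have h2 := ENNReal.rpow_le_rpow h1 (inv_nonneg.2 hα.le)
  have h3 : (ENNReal.ofReal (2 ^ ((q:ℝ) * α))) ^ (α⁻¹ : ℝ) = (2:ℝ≥0∞) ^ q := by
    rw [ENNReal.ofReal_rpow_of_pos (two_rpow_pos _), ← Real.rpow_mul (by norm_num : (0:ℝ) ≤ 2)]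
    rw [mul_assoc, mul_inv_cancel₀ hα.ne', mul_one, Real.rpow_natCast]
    rw [ENNReal.ofReal_pow (by norm_num), ENNReal.ofReal_ofNat]
  rw [h3] at h2
  exact h2

noncomputable def Kconst (Lc cc σ' CB β : ℝ) : ℝ :=
  (Lc ^ (2*σ') + CB ^ 2 * (1 - 2 ^ (-β))⁻¹) / cc ^ 2

lemma oneSub_rpow_pos {β : ℝ} (hβ : 0 < β) : (0:ℝ) < 1 - 2 ^ (-β) := by
  have : (2:ℝ) ^ (-β) < 1 := by
    rw [← Real.rpow_zero 2]
    exact Real.rpow_lt_rpow_left_iff (by norm_num) |>.2 (by linarith)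
  linarith

lemma Kconst_pos {Lc cc σ' CB β : ℝ} (hL : 1 ≤ Lc) (hc : 0 < cc) (hCB : 0 < CB)
    (hβ : 0 < β) : 0 < Kconst Lc cc σ' CB β := by
  have h1 : (0:ℝ) < Lc ^ (2*σ') := Real.rpow_pos_of_pos (by linarith) _
  have h2 := oneSub_rpow_pos hβ
  have : (0:ℝ) < (1 - 2 ^ (-β))⁻¹ := inv_pos.2 h2
  rw [Kconst]
  positivity

lemma Kconst_ge1 {Lc cc σ' CB β : ℝ} (hL : 1 ≤ Lc) (hc : 0 < cc) (hσ' : 0 ≤ σ')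
    (hβ : 0 < β) : Lc ^ (2*σ') / cc ^ 2 ≤ Kconst Lc cc σ' CB β := by
  have h2 := oneSub_rpow_pos hβ
  have : (0:ℝ) ≤ CB ^ 2 * (1 - 2 ^ (-β))⁻¹ := by positivity
  rw [Kconst]
  apply div_le_div_of_nonneg_right ?_ (by positivity)
  linarith

lemma Kconst_ge2 {Lc cc σ' CB β : ℝ} (hL : 1 ≤ Lc) (hc : 0 < cc)
    (hβ : 0 < β) : CB ^ 2 * (1 - 2 ^ (-β))⁻¹ / cc ^ 2 ≤ Kconst Lc cc σ' CB β := by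
  have h1 : (0:ℝ) < Lc ^ (2*σ') := Real.rpow_pos_of_pos (by linarith) _
  rw [Kconst]
  apply div_le_div_of_nonneg_right ?_ (by positivity)
  linarith

lemma aux_badU (L c ν σ δu CB : ℝ) (hL : 1 ≤ L) (hc : 0 < c) (hν : 0 < ν) (hCB : 0 < CB)
    (hσ0 : 0 < σ) (hgap : 2*σ + 1 < δu) (hδu3 : δu < 3)
    (a G : ℤ → ℝ)
    (hBern : ∀ qq : ℕ, G (qq : ℤ) ≤ CB * ∑ p ∈ Finset.Icc (-1:ℤ) (qq:ℤ), (2:ℝ) ^ p * a p)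
    (q : ℕ) (hq : ¬ GoodU L c ν σ a G q) :
    ENNReal.ofReal (ν ^ 2 * 2 ^ ((q:ℝ) * (1 + δu)) / Kconst L c σ CB (3 - δu))
      ≤ sumQ (fun p => ENNReal.ofReal (((2:ℝ) ^ p) ^ (-1 + δu) * a p ^ 2)) := by
  have hβ : (0:ℝ) < 3 - δu := by linarith
  have hK : 0 < Kconst L c σ CB (3 - δu) := Kconst_pos hL hc hCB hβ
  have hL0 : (0:ℝ) < L := by linarith
  have hcν : (0:ℝ) < c * ν := by positivity
  rw [GoodU, not_and_or] at hq
  rcases hq with hA | hB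
  · -- case A : some p > q fails
    push_neg at hA
    obtain ⟨p, hpq, hple⟩ := hA
    set x : ℝ := ((p : ℤ) : ℝ) with hx
    set y : ℝ := ((q : ℕ) : ℝ) with hy
    have hxy : y + 1 ≤ x := by
      rw [hx, hy]
      have : ((q:ℤ) : ℝ) + 1 ≤ ((p:ℤ) : ℝ) := by exact_mod_cast Int.add_one_le_of_lt hpq
      simpa using this
    -- rewrite hple into rpow form
    have hre : (L * (2:ℝ) ^ (p - (q : ℤ))) ^ σ * ((2:ℝ) ^ (q : ℤ))⁻¹ * a p
        = L ^ σ * 2 ^ ((x - y) * σ) * 2 ^ (-y) * a p := by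
      rw [Real.mul_rpow hL0.le (by positivity), two_zpow_rpow, two_zpow_eq_rpow,
        ← Real.rpow_neg (by norm_num : (0:ℝ) ≤ 2)]
      have e1 : ((p - (q:ℤ) : ℤ) : ℝ) * σ = (x - y) * σ := by rw [hx, hy]; push_cast; ring
      have e2 : (-((q:ℤ) : ℝ)) = -y := by rw [hy]; push_cast; ring
      rw [e1, e2]
    rw [hre] at hple
    -- hyp2
    have hyp2 : (c * ν) * 2 ^ (y - (x - y) * σ) ≤ L ^ σ * a p := by
      have hmul := mul_le_mul_of_nonneg_right hple (two_rpow_pos (y - (x - y) * σ)).le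
      calc (c * ν) * 2 ^ (y - (x - y) * σ) ≤
            L ^ σ * 2 ^ ((x - y) * σ) * 2 ^ (-y) * a p * 2 ^ (y - (x - y) * σ) := hmul
        _ = L ^ σ * a p * (2 ^ ((x - y) * σ) * 2 ^ (-y) * 2 ^ (y - (x - y) * σ)) := by ring
        _ = L ^ σ * a p := by
            rw [rpow_add2, rpow_add2, show ((x - y) * σ + -y + (y - (x - y) * σ)) = 0 by ring,
              Real.rpow_zero, mul_one]
    have hcore := aux_caseA L (c * ν) σ (-1 + δu) (y - (x - y) * σ) x (y * (1 + δu))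
      hL hcν (a p) hyp2 (by nlinarith)
    -- compare constants
    have hcmp : ν ^ 2 * 2 ^ ((q:ℝ) * (1 + δu)) / Kconst L c σ CB (3 - δu)
        ≤ (c * ν) ^ 2 / L ^ (2*σ) * 2 ^ (y * (1 + δu)) := by
      rw [div_mul_eq_mul_div, div_le_div_iff₀ hK (Real.rpow_pos_of_pos hL0 _)]
      have h1 := Kconst_ge1 (CB := CB) hL hc hσ0.le hβ
      have h2 : (0:ℝ) < 2 ^ ((q:ℝ) * (1 + δu)) := two_rpow_pos _
      have hyq : y * (1 + δu) = (q:ℝ) * (1 + δu) := by rw [hy]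
      rw [hyq]
      have hKL : L ^ (2*σ) ≤ Kconst L c σ CB (3 - δu) * c ^ 2 := by
        have := mul_le_mul_of_nonneg_right h1 (sq_nonneg c)
        rw [div_mul_cancel₀] at this
        · linarith
        · positivity
      nlinarith [Real.rpow_pos_of_pos hL0 (2*σ), sq_nonneg ν, h2,
        mul_le_mul_of_nonneg_right hKL (mul_nonneg (mul_nonneg (sq_nonneg ν) h2.le) (sq_nonneg 1))]
    have hterm : ((2:ℝ) ^ p) ^ (-1 + δu) * a p ^ 2 = 2 ^ (x * (-1 + δu)) * a p ^ 2 := by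
      rw [two_zpow_rpow]
    calc ENNReal.ofReal (ν ^ 2 * 2 ^ ((q:ℝ) * (1 + δu)) / Kconst L c σ CB (3 - δu))
        ≤ ENNReal.ofReal (((2:ℝ) ^ p) ^ (-1 + δu) * a p ^ 2) := by
          apply ENNReal.ofReal_le_ofReal
          rw [hterm]
          exact hcmp.trans hcore
      _ ≤ sumQ (fun p => ENNReal.ofReal (((2:ℝ) ^ p) ^ (-1 + δu) * a p ^ 2)) :=
          aux_le_sumQ _ p (by omega)
  · -- case B : local part fails
    push_neg at hB
    have hBern' := hBern q
    have hG : c * ν * ((2:ℝ) ^ (q : ℤ)) ^ 2 ≤ G (q : ℤ) := by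
      have hpos : (0:ℝ) < ((2:ℝ) ^ (q : ℤ)) ^ 2 := by positivity
      rw [← le_div_iff₀ hpos] at *
      calc c * ν ≤ (((2:ℝ) ^ (q : ℤ)) ^ 2)⁻¹ * G (q : ℤ) := hB
        _ = G (q : ℤ) / ((2:ℝ) ^ (q : ℤ)) ^ 2 := by ring
    have h2q : ((2:ℝ) ^ (q : ℤ)) ^ 2 = 2 ^ ((q:ℝ) * 2) := by
      rw [two_zpow_eq_rpow, rpow_sq]
      congr 1
      push_cast
      ring
    have hsum : ∀ p ∈ Finset.Icc (-1:ℤ) (q:ℤ), (2:ℝ) ^ ((p:ℝ) * 1) * a p = (2:ℝ) ^ p * a p := by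
      intro p _
      rw [mul_one, ← two_zpow_eq_rpow]
    have hyp : c * ν * 2 ^ ((q:ℝ) * 2) ≤
        CB * ∑ p ∈ Finset.Icc (-1:ℤ) (q:ℤ), (2:ℝ) ^ ((p:ℝ) * 1) * a p := by
      rw [Finset.sum_congr rfl hsum, ← h2q]
      calc c * ν * ((2:ℝ) ^ (q : ℤ)) ^ 2 ≤ G (q : ℤ) := hG
        _ ≤ _ := hBern'
    have hcore := aux_caseB CB (c * ν) hCB hcν 2 1 (-1 + δu) (by linarith) a q hyp
    rw [show (2 * (1:ℝ) - (-1 + δu)) = 3 - δu by ring,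
      show (2 * (2:ℝ) - (3 - δu)) = 1 + δu by ring] at hcore
    -- compare constants
    set D : ℝ := 1 - 2 ^ (-(3 - δu)) with hD
    have hD0 : 0 < D := oneSub_rpow_pos hβ
    have h1 := Kconst_ge2 (σ' := σ) (CB := CB) hL hc hβ
    have hcmp : ν ^ 2 * 2 ^ ((q:ℝ) * (1 + δu)) / Kconst L c σ CB (3 - δu)
        ≤ (c * ν) ^ 2 * D / CB ^ 2 * 2 ^ ((q:ℝ) * (1 + δu)) := by
      have hbase : ν ^ 2 / Kconst L c σ CB (3 - δu) ≤ (c * ν) ^ 2 * D / CB ^ 2 := by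
        have hd0 : (0:ℝ) < CB ^ 2 * D⁻¹ / c ^ 2 := by positivity
        have h3 : ν ^ 2 / Kconst L c σ CB (3 - δu) ≤ ν ^ 2 / (CB ^ 2 * D⁻¹ / c ^ 2) :=
          div_le_div_of_nonneg_left (sq_nonneg ν) hd0 h1
        have h4 : ν ^ 2 / (CB ^ 2 * D⁻¹ / c ^ 2) = (c * ν) ^ 2 * D / CB ^ 2 := by
          field_simp
        linarith [h3, h4.le]
      calc ν ^ 2 * 2 ^ ((q:ℝ) * (1 + δu)) / Kconst L c σ CB (3 - δu)
          = (ν ^ 2 / Kconst L c σ CB (3 - δu)) * 2 ^ ((q:ℝ) * (1 + δu)) := by ring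
        _ ≤ ((c * ν) ^ 2 * D / CB ^ 2) * 2 ^ ((q:ℝ) * (1 + δu)) :=
            mul_le_mul_of_nonneg_right hbase (two_rpow_pos _).le
    have hfin : ν ^ 2 * 2 ^ ((q:ℝ) * (1 + δu)) / Kconst L c σ CB (3 - δu)
        ≤ ∑ p ∈ Finset.Icc (-1:ℤ) (q:ℤ), (2:ℝ) ^ ((p:ℝ) * (-1 + δu)) * a p ^ 2 :=
      hcmp.trans hcore
    calc ENNReal.ofReal (ν ^ 2 * 2 ^ ((q:ℝ) * (1 + δu)) / Kconst L c σ CB (3 - δu))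
        ≤ ENNReal.ofReal (∑ p ∈ Finset.Icc (-1:ℤ) (q:ℤ), (2:ℝ) ^ ((p:ℝ) * (-1 + δu)) * a p ^ 2) :=
          ENNReal.ofReal_le_ofReal hfin
      _ = ∑ p ∈ Finset.Icc (-1:ℤ) (q:ℤ),
            ENNReal.ofReal (((2:ℝ) ^ p) ^ (-1 + δu) * a p ^ 2) := by
          rw [ENNReal.ofReal_sum_of_nonneg (fun p _ => by positivity)]
          exact Finset.sum_congr rfl (fun p _ => by rw [two_zpow_rpow])
      _ ≤ sumQ (fun p => ENNReal.ofReal (((2:ℝ) ^ p) ^ (-1 + δu) * a p ^ 2)) :=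
          aux_sum_le_sumQ _ _ (fun p hp => (Finset.mem_Icc.1 hp).1)

lemma aux_badB (L c μ' r δ δb CB : ℝ) (hL : 1 ≤ L) (hc : 0 < c) (hμ : 0 < μ') (hCB : 0 < CB)
    (hr : 0 < r) (hδ0 : 0 < δ) (hgap : 2*δ + 1 < δb) (hδb3 : δb < 3)
    (a G : ℤ → ℝ)
    (hBern : ∀ qq : ℕ, G (qq : ℤ) ≤
      CB * ∑ p ∈ Finset.Icc (-1:ℤ) (qq:ℤ), ((2:ℝ) ^ p) ^ (1 + 3 / r) * a p)
    (q : ℕ) (hq : ¬ GoodB L c μ' r δ a G q) :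
    ENNReal.ofReal (μ' ^ 2 * 2 ^ ((q:ℝ) * (δb - 1)) / Kconst L c δ CB (3 - δb))
      ≤ sumQ (fun p => ENNReal.ofReal (((2:ℝ) ^ p) ^ (-1 + δb + 6 / r) * a p ^ 2)) := by
  have hβ : (0:ℝ) < 3 - δb := by linarith
  have hK : 0 < Kconst L c δ CB (3 - δb) := Kconst_pos hL hc hCB hβ
  have hL0 : (0:ℝ) < L := by linarith
  have hcν : (0:ℝ) < c * μ' := by positivity
  rw [GoodB, not_and_or] at hq
  rcases hq with hA | hB
  · push_neg at hA
    obtain ⟨p, hpq, hple⟩ := hA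
    set x : ℝ := ((p : ℤ) : ℝ) with hx
    set y : ℝ := ((q : ℕ) : ℝ) with hy
    have hxy : y + 1 ≤ x := by
      rw [hx, hy]
      have : ((q:ℤ) : ℝ) + 1 ≤ ((p:ℤ) : ℝ) := by exact_mod_cast Int.add_one_le_of_lt hpq
      simpa using this
    have hre : (L * (2:ℝ) ^ (p - (q : ℤ))) ^ δ * ((2:ℝ) ^ p) ^ (3 / r) * a p
        = L ^ δ * 2 ^ ((x - y) * δ) * 2 ^ (x * (3 / r)) * a p := by
      rw [Real.mul_rpow hL0.le (by positivity), two_zpow_rpow, two_zpow_rpow]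
      have e1 : ((p - (q:ℤ) : ℤ) : ℝ) * δ = (x - y) * δ := by rw [hx, hy]; push_cast; ring
      rw [e1]
    rw [hre] at hple
    have hyp2 : (c * μ') * 2 ^ (-(x - y) * δ - x * (3 / r)) ≤ L ^ δ * a p := by
      have hmul := mul_le_mul_of_nonneg_right hple
        (two_rpow_pos (-(x - y) * δ - x * (3 / r))).le
      calc (c * μ') * 2 ^ (-(x - y) * δ - x * (3 / r)) ≤
            L ^ δ * 2 ^ ((x - y) * δ) * 2 ^ (x * (3 / r)) * a p *
              2 ^ (-(x - y) * δ - x * (3 / r)) := hmul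
        _ = L ^ δ * a p *
              (2 ^ ((x - y) * δ) * 2 ^ (x * (3 / r)) * 2 ^ (-(x - y) * δ - x * (3 / r))) := by
            ring
        _ = L ^ δ * a p := by
            rw [rpow_add2, rpow_add2,
              show ((x - y) * δ + x * (3 / r) + (-(x - y) * δ - x * (3 / r))) = 0 by ring,
              Real.rpow_zero, mul_one]
    have hcore := aux_caseA L (c * μ') δ (-1 + δb + 6 / r) (-(x - y) * δ - x * (3 / r)) x
      (y * (δb - 1)) hL hcν (a p) hyp2 (by
        have h6 : x * (6 / r) - 2 * (x * (3 / r)) = 0 := by ring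
        nlinarith)
    have hcmp : μ' ^ 2 * 2 ^ ((q:ℝ) * (δb - 1)) / Kconst L c δ CB (3 - δb)
        ≤ (c * μ') ^ 2 / L ^ (2*δ) * 2 ^ (y * (δb - 1)) := by
      rw [div_mul_eq_mul_div, div_le_div_iff₀ hK (Real.rpow_pos_of_pos hL0 _)]
      have h1 := Kconst_ge1 (CB := CB) hL hc hδ0.le hβ
      have h2 : (0:ℝ) < 2 ^ ((q:ℝ) * (δb - 1)) := two_rpow_pos _
      have hyq : y * (δb - 1) = (q:ℝ) * (δb - 1) := by rw [hy]
      rw [hyq]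
      have hKL : L ^ (2*δ) ≤ Kconst L c δ CB (3 - δb) * c ^ 2 := by
        have := mul_le_mul_of_nonneg_right h1 (sq_nonneg c)
        rw [div_mul_cancel₀] at this
        · linarith
        · positivity
      nlinarith [Real.rpow_pos_of_pos hL0 (2*δ), sq_nonneg μ', h2,
        mul_le_mul_of_nonneg_right hKL (mul_nonneg (mul_nonneg (sq_nonneg μ') h2.le) (sq_nonneg 1))]
    have hterm : ((2:ℝ) ^ p) ^ (-1 + δb + 6 / r) * a p ^ 2
        = 2 ^ (x * (-1 + δb + 6 / r)) * a p ^ 2 := by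
      rw [two_zpow_rpow]
    calc ENNReal.ofReal (μ' ^ 2 * 2 ^ ((q:ℝ) * (δb - 1)) / Kconst L c δ CB (3 - δb))
        ≤ ENNReal.ofReal (((2:ℝ) ^ p) ^ (-1 + δb + 6 / r) * a p ^ 2) := by
          apply ENNReal.ofReal_le_ofReal
          rw [hterm]
          exact hcmp.trans hcore
      _ ≤ sumQ (fun p => ENNReal.ofReal (((2:ℝ) ^ p) ^ (-1 + δb + 6 / r) * a p ^ 2)) :=
          aux_le_sumQ _ p (by omega)
  · push_neg at hB
    have hBern' := hBern q
    have hG : c * μ' * (2:ℝ) ^ (q : ℤ) ≤ G (q : ℤ) := by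
      have hpos : (0:ℝ) < (2:ℝ) ^ (q : ℤ) := by positivity
      rw [← le_div_iff₀ hpos] at *
      calc c * μ' ≤ ((2:ℝ) ^ (q : ℤ))⁻¹ * G (q : ℤ) := hB
        _ = G (q : ℤ) / (2:ℝ) ^ (q : ℤ) := by ring
    have h2q : (2:ℝ) ^ (q : ℤ) = 2 ^ ((q:ℝ) * 1) := by
      rw [two_zpow_eq_rpow]
      congr 1
      push_cast
      ring
    have hsum : ∀ p ∈ Finset.Icc (-1:ℤ) (q:ℤ),
        (2:ℝ) ^ ((p:ℝ) * (1 + 3 / r)) * a p = ((2:ℝ) ^ p) ^ (1 + 3 / r) * a p := by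
      intro p _
      rw [two_zpow_rpow]
    have hyp : c * μ' * 2 ^ ((q:ℝ) * 1) ≤
        CB * ∑ p ∈ Finset.Icc (-1:ℤ) (q:ℤ), (2:ℝ) ^ ((p:ℝ) * (1 + 3 / r)) * a p := by
      rw [Finset.sum_congr rfl hsum, ← h2q]
      exact hG.trans hBern'
    have hcore := aux_caseB CB (c * μ') hCB hcν 1 (1 + 3 / r) (-1 + δb + 6 / r)
      (by
        have : 2 * (1 + 3 / r) - (-1 + δb + 6 / r) = 3 - δb := by ring
        rw [this]; linarith) a q hyp
    rw [show (2 * ((1:ℝ) + 3 / r) - (-1 + δb + 6 / r)) = 3 - δb by ring,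
      show (2 * (1:ℝ) - (3 - δb)) = δb - 1 by ring] at hcore
    set D : ℝ := 1 - 2 ^ (-(3 - δb)) with hD
    have hD0 : 0 < D := oneSub_rpow_pos hβ
    have h1 := Kconst_ge2 (σ' := δ) (CB := CB) hL hc hβ
    have hcmp : μ' ^ 2 * 2 ^ ((q:ℝ) * (δb - 1)) / Kconst L c δ CB (3 - δb)
        ≤ (c * μ') ^ 2 * D / CB ^ 2 * 2 ^ ((q:ℝ) * (δb - 1)) := by
      have hbase : μ' ^ 2 / Kconst L c δ CB (3 - δb) ≤ (c * μ') ^ 2 * D / CB ^ 2 := by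
        have hd0 : (0:ℝ) < CB ^ 2 * D⁻¹ / c ^ 2 := by positivity
        have h3 : μ' ^ 2 / Kconst L c δ CB (3 - δb) ≤ μ' ^ 2 / (CB ^ 2 * D⁻¹ / c ^ 2) :=
          div_le_div_of_nonneg_left (sq_nonneg μ') hd0 h1
        have h4 : μ' ^ 2 / (CB ^ 2 * D⁻¹ / c ^ 2) = (c * μ') ^ 2 * D / CB ^ 2 := by
          field_simp
        linarith [h3, h4.le]
      calc μ' ^ 2 * 2 ^ ((q:ℝ) * (δb - 1)) / Kconst L c δ CB (3 - δb)
          = (μ' ^ 2 / Kconst L c δ CB (3 - δb)) * 2 ^ ((q:ℝ) * (δb - 1)) := by ring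
        _ ≤ ((c * μ') ^ 2 * D / CB ^ 2) * 2 ^ ((q:ℝ) * (δb - 1)) :=
            mul_le_mul_of_nonneg_right hbase (two_rpow_pos _).le
    have hfin : μ' ^ 2 * 2 ^ ((q:ℝ) * (δb - 1)) / Kconst L c δ CB (3 - δb)
        ≤ ∑ p ∈ Finset.Icc (-1:ℤ) (q:ℤ), (2:ℝ) ^ ((p:ℝ) * (-1 + δb + 6 / r)) * a p ^ 2 :=
      hcmp.trans hcore
    calc ENNReal.ofReal (μ' ^ 2 * 2 ^ ((q:ℝ) * (δb - 1)) / Kconst L c δ CB (3 - δb))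
        ≤ ENNReal.ofReal (∑ p ∈ Finset.Icc (-1:ℤ) (q:ℤ),
            (2:ℝ) ^ ((p:ℝ) * (-1 + δb + 6 / r)) * a p ^ 2) :=
          ENNReal.ofReal_le_ofReal hfin
      _ = ∑ p ∈ Finset.Icc (-1:ℤ) (q:ℤ),
            ENNReal.ofReal (((2:ℝ) ^ p) ^ (-1 + δb + 6 / r) * a p ^ 2) := by
          rw [ENNReal.ofReal_sum_of_nonneg (fun p _ => by positivity)]
          exact Finset.sum_congr rfl (fun p _ => by rw [two_zpow_rpow])
      _ ≤ sumQ (fun p => ENNReal.ofReal (((2:ℝ) ^ p) ^ (-1 + δb + 6 / r) * a p ^ 2)) :=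
          aux_sum_le_sumQ _ _ (fun p hp => (Finset.mem_Icc.1 hp).1)

lemma aux_pointwiseU (L c ν σ δu CB : ℝ) (hL : 1 ≤ L) (hc : 0 < c) (hν : 0 < ν) (hCB : 0 < CB)
    (hσ0 : 0 < σ) (hgap : 2*σ + 1 < δu) (hδu3 : δu < 3)
    (a G : ℤ → ℝ)
    (hBern : ∀ qq : ℕ, G (qq : ℤ) ≤ CB * ∑ p ∈ Finset.Icc (-1:ℤ) (qq:ℤ), (2:ℝ) ^ p * a p) :
    LambdaU L c ν σ a G ≤ 1 + 2 *
      (ENNReal.ofReal (Kconst L c σ CB (3 - δu)) *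
        sumQ (fun p => ENNReal.ofReal (((2:ℝ) ^ p) ^ (-1 + δu) * a p ^ 2)) /
        (ENNReal.ofReal ν) ^ 2) ^ ((1 + δu)⁻¹ : ℝ) := by
  classical
  rw [LambdaU]
  apply aux_core
  intro q hq
  have hbad := aux_badU L c ν σ δu CB hL hc hν hCB hσ0 hgap hδu3 a G hBern q hq
  exact aux_conv ν (Kconst L c σ CB (3 - δu)) (1 + δu) hν
    (Kconst_pos hL hc hCB (by linarith)) (by linarith) _ q hbad

lemma aux_pointwiseB (L c μ' r δ δb CB : ℝ) (hL : 1 ≤ L) (hc : 0 < c) (hμ : 0 < μ')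
    (hCB : 0 < CB) (hr : 0 < r) (hδ0 : 0 < δ) (hgap : 2*δ + 1 < δb) (hδb2 : 2 < δb)
    (hδb3 : δb < 3)
    (a G : ℤ → ℝ)
    (hBern : ∀ qq : ℕ, G (qq : ℤ) ≤
      CB * ∑ p ∈ Finset.Icc (-1:ℤ) (qq:ℤ), ((2:ℝ) ^ p) ^ (1 + 3 / r) * a p) :
    LambdaB L c μ' r δ a G ≤ 1 + 2 *
      (ENNReal.ofReal (Kconst L c δ CB (3 - δb)) *
        sumQ (fun p => ENNReal.ofReal (((2:ℝ) ^ p) ^ (-1 + δb + 6 / r) * a p ^ 2)) /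
        (ENNReal.ofReal μ') ^ 2) ^ ((δb - 1)⁻¹ : ℝ) := by
  classical
  rw [LambdaB]
  apply aux_core
  intro q hq
  have hbad := aux_badB L c μ' r δ δb CB hL hc hμ hCB hr hδ0 hgap hδb3 a G hBern q hq
  exact aux_conv μ' (Kconst L c δ CB (3 - δb)) (δb - 1) hμ
    (Kconst_pos hL hc hCB (by linarith)) (by linarith) _ q hbad

lemma aux_avg (t₀ T : ℝ) (hT : 0 < T) (K CI ν α : ℝ) (hK : 0 < K) (hCI : 0 < CI)
    (hν : 0 < ν) (hα : 1 < α)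
    (S : ℝ → ℝ≥0∞) (hSm : Measurable S) (Λ : ℝ → ℝ≥0∞) (E : ℝ≥0∞)
    (hpt : ∀ t ∈ Set.Icc t₀ (t₀ + T), Λ t ≤ 1 + 2 *
      (ENNReal.ofReal K * S t / (ENNReal.ofReal ν) ^ 2) ^ (α⁻¹ : ℝ))
    (hint : timeAvg t₀ T S ≤ ENNReal.ofReal CI * E) :
    timeAvg t₀ T Λ ≤ 1 + ENNReal.ofReal (2 * max (K * CI) 1) *
      ((E / (ENNReal.ofReal ν) ^ 2) ^ (α⁻¹ : ℝ)) := by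
  have he0 : (0:ℝ) < α⁻¹ := inv_pos.2 (by linarith)
  have he1 : (α⁻¹ : ℝ) < 1 := by
    rw [inv_lt_one_iff₀]; right; exact hα
  set h : ℝ → ℝ≥0∞ := fun t => ENNReal.ofReal K * S t / (ENNReal.ofReal ν) ^ 2 with hh
  have hhm : Measurable h := (hSm.const_mul _).div_const _
  have hhe : Measurable (fun t => h t ^ (α⁻¹ : ℝ)) := hhm.pow_const _
  have step1 : timeAvg t₀ T Λ ≤ timeAvg t₀ T (fun t => 1 + 2 * h t ^ (α⁻¹ : ℝ)) :=
    timeAvg_mono t₀ T _ _ hpt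
  have step2 : timeAvg t₀ T (fun t => 1 + 2 * h t ^ (α⁻¹ : ℝ)) =
      1 + 2 * timeAvg t₀ T (fun t => h t ^ (α⁻¹ : ℝ)) := by
    rw [timeAvg_add t₀ T _ _ measurable_const, timeAvg_const_one t₀ T hT,
      timeAvg_const_mul t₀ T 2 _ hhe]
  have step3 : timeAvg t₀ T (fun t => h t ^ (α⁻¹ : ℝ)) ≤ (timeAvg t₀ T h) ^ (α⁻¹ : ℝ) :=
    timeAvg_jensen t₀ T hT h hhm _ he0 he1
  have step4 : timeAvg t₀ T h ≤ ENNReal.ofReal (K * CI) * (E / (ENNReal.ofReal ν) ^ 2) := by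
    have hre : ∀ t, h t = (ENNReal.ofReal K * ((ENNReal.ofReal ν) ^ 2)⁻¹) * S t := by
      intro t
      show ENNReal.ofReal K * S t / (ENNReal.ofReal ν) ^ 2 = _
      rw [div_eq_mul_inv, mul_right_comm]
    have : timeAvg t₀ T h = (ENNReal.ofReal K * ((ENNReal.ofReal ν) ^ 2)⁻¹) * timeAvg t₀ T S := by
      rw [show h = fun t => (ENNReal.ofReal K * ((ENNReal.ofReal ν) ^ 2)⁻¹) * S t from
        funext hre]
      exact timeAvg_const_mul t₀ T _ _ hSm
    rw [this]
    calc (ENNReal.ofReal K * ((ENNReal.ofReal ν) ^ 2)⁻¹) * timeAvg t₀ T S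
        ≤ (ENNReal.ofReal K * ((ENNReal.ofReal ν) ^ 2)⁻¹) * (ENNReal.ofReal CI * E) :=
          mul_le_mul_right hint _
      _ = ENNReal.ofReal (K * CI) * (E / (ENNReal.ofReal ν) ^ 2) := by
          rw [ENNReal.ofReal_mul hK.le, div_eq_mul_inv]
          ring
  have step5 : (timeAvg t₀ T h) ^ (α⁻¹ : ℝ) ≤
      ENNReal.ofReal (max (K * CI) 1) * (E / (ENNReal.ofReal ν) ^ 2) ^ (α⁻¹ : ℝ) := by
    calc (timeAvg t₀ T h) ^ (α⁻¹ : ℝ)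
        ≤ (ENNReal.ofReal (K * CI) * (E / (ENNReal.ofReal ν) ^ 2)) ^ (α⁻¹ : ℝ) :=
          ENNReal.rpow_le_rpow step4 he0.le
      _ = (ENNReal.ofReal (K * CI)) ^ (α⁻¹ : ℝ) *
            (E / (ENNReal.ofReal ν) ^ 2) ^ (α⁻¹ : ℝ) :=
          ENNReal.mul_rpow_of_nonneg _ _ he0.le
      _ ≤ ENNReal.ofReal (max (K * CI) 1) * (E / (ENNReal.ofReal ν) ^ 2) ^ (α⁻¹ : ℝ) := by
          apply mul_le_mul_left
          have hx1 : (1:ℝ≥0∞) ≤ ENNReal.ofReal (max (K * CI) 1) := by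
            rw [ENNReal.one_le_ofReal]
            exact le_max_right _ _
          calc (ENNReal.ofReal (K * CI)) ^ (α⁻¹ : ℝ)
              ≤ (ENNReal.ofReal (max (K * CI) 1)) ^ (α⁻¹ : ℝ) :=
                ENNReal.rpow_le_rpow (ENNReal.ofReal_le_ofReal (le_max_left _ _)) he0.le
            _ ≤ (ENNReal.ofReal (max (K * CI) 1)) ^ (1 : ℝ) :=
                ENNReal.rpow_le_rpow_of_exponent_le hx1 (by linarith)
            _ = ENNReal.ofReal (max (K * CI) 1) := ENNReal.rpow_one _
  calc timeAvg t₀ T Λ ≤ 1 + 2 * timeAvg t₀ T (fun t => h t ^ (α⁻¹ : ℝ)) := by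
        rw [← step2]; exact step1
    _ ≤ 1 + 2 * (ENNReal.ofReal (max (K * CI) 1) * (E / (ENNReal.ofReal ν) ^ 2) ^ (α⁻¹ : ℝ)) := by
        exact add_le_add_right (mul_le_mul_right (step3.trans step5) 2) 1
    _ = 1 + ENNReal.ofReal (2 * max (K * CI) 1) * (E / (ENNReal.ofReal ν) ^ 2) ^ (α⁻¹ : ℝ) := by
        rw [ENNReal.ofReal_mul (by norm_num), ENNReal.ofReal_ofNat, mul_assoc]


/-- the time-averaged velocity and magnetic determining wavenumbers for
Hall-MHD are bounded by the phenomenological dissipation wavenumbers: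
`⟨Λ_u⟩ ≤ 1 + C κ_u` and `⟨Λ_b⟩ ≤ 1 + C κ_e`, where
`κ_u = (ε_u/ν³)^{1/(1+δ_u)}`, `ε_u = ν ⟨Σ_{q≥-1} λ_q² e^u_q⟩`,
`κ_e = (ε_b/μ³)^{1/(δ_b-1)}`, `ε_b = μ ⟨Σ_{q≥-1} λ_q² e^b_q⟩`, under the
scale-localized intermittency assumptions. -/
theorem avg_wavenumbers_hall_mhd
    (L r c σ δ δu δb CB CI : ℝ)
    (hL : 1 ≤ L) (hr : 0 < r) (hc : 0 < c) (hCB : 0 < CB) (hCI : 0 < CI)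
    (hσ0 : 0 < σ) (hσ1 : σ < 1) (hδ0 : 0 < δ) (hδ1 : δ < 1)
    (hδu1 : 2 * σ + 1 < δu) (hδu3 : δu < 3)
    (hδb1 : max 2 (2 * δ + 1) < δb) (hδb3 : δb < 3) :
    ∃ C : ℝ, 0 < C ∧
      ∀ (ν μ T t₀ : ℝ) (au Gu ab Gb eu eb : ℤ → ℝ → ℝ),
        0 < ν → 0 < μ → 0 < T →
        (∀ q : ℤ, -1 ≤ q → Measurable (au q)) →
        (∀ q : ℤ, -1 ≤ q → Measurable (Gu q)) →
        (∀ q : ℤ, -1 ≤ q → Measurable (ab q)) →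
        (∀ q : ℤ, -1 ≤ q → Measurable (Gb q)) →
        (∀ q : ℤ, -1 ≤ q → Measurable (eu q)) →
        (∀ q : ℤ, -1 ≤ q → Measurable (eb q)) →
        (∀ q : ℤ, -1 ≤ q → ∀ t ∈ Set.Icc t₀ (t₀ + T), 0 ≤ au q t) →
        (∀ q : ℤ, -1 ≤ q → ∀ t ∈ Set.Icc t₀ (t₀ + T), 0 ≤ Gu q t) →
        (∀ q : ℤ, -1 ≤ q → ∀ t ∈ Set.Icc t₀ (t₀ + T), 0 ≤ ab q t) →
        (∀ q : ℤ, -1 ≤ q → ∀ t ∈ Set.Icc t₀ (t₀ + T), 0 ≤ Gb q t) →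
        (∀ q : ℤ, -1 ≤ q → ∀ t ∈ Set.Icc t₀ (t₀ + T), 0 ≤ eu q t) →
        (∀ q : ℤ, -1 ≤ q → ∀ t ∈ Set.Icc t₀ (t₀ + T), 0 ≤ eb q t) →
        -- Bernstein-type bounds for every `q ≥ -1` and every `t`
        (∀ q : ℤ, -1 ≤ q → ∀ t ∈ Set.Icc t₀ (t₀ + T),
            Gu q t ≤ CB * ∑ p ∈ Finset.Icc (-1 : ℤ) q, (2:ℝ) ^ p * au p t) →
        (∀ q : ℤ, -1 ≤ q → ∀ t ∈ Set.Icc t₀ (t₀ + T),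
            Gb q t ≤ CB * ∑ p ∈ Finset.Icc (-1 : ℤ) q,
              ((2:ℝ) ^ p) ^ (1 + 3 / r) * ab p t) →
        -- measurability of `t ↦ Λ_u(t)` and `t ↦ Λ_b(t)`
        Measurable (fun t => LambdaU L c ν σ (fun q => au q t) (fun q => Gu q t)) →
        Measurable (fun t => LambdaB L c μ r δ (fun q => ab q t) (fun q => Gb q t)) →
        -- finiteness of `⟨Σ_{q≥-1} λ_q² e^u_q⟩` and `⟨Σ_{q≥-1} λ_q² e^b_q⟩`
        timeAvg t₀ T (fun t => sumQ fun q =>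
            ENNReal.ofReal (((2:ℝ) ^ q) ^ 2 * eu q t)) ≠ ⊤ →
        timeAvg t₀ T (fun t => sumQ fun q =>
            ENNReal.ofReal (((2:ℝ) ^ q) ^ 2 * eb q t)) ≠ ⊤ →
        -- intermittency relations
        timeAvg t₀ T (fun t => sumQ fun q =>
            ENNReal.ofReal (((2:ℝ) ^ q) ^ (-1 + δu) * au q t ^ 2)) ≤
          ENNReal.ofReal CI *
            timeAvg t₀ T (fun t => sumQ fun q =>
              ENNReal.ofReal (((2:ℝ) ^ q) ^ 2 * eu q t)) →
        timeAvg t₀ T (fun t => sumQ fun q =>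
            ENNReal.ofReal (((2:ℝ) ^ q) ^ (-1 + δb + 6 / r) * ab q t ^ 2)) ≤
          ENNReal.ofReal CI *
            timeAvg t₀ T (fun t => sumQ fun q =>
              ENNReal.ofReal (((2:ℝ) ^ q) ^ 2 * eb q t)) →
        -- conclusions: `⟨Λ_u⟩ ≤ 1 + C κ_u` and `⟨Λ_b⟩ ≤ 1 + C κ_e`
        (timeAvg t₀ T (fun t => LambdaU L c ν σ (fun q => au q t) (fun q => Gu q t)) ≤
            1 + ENNReal.ofReal C *
              ((ENNReal.ofReal ν *
                  timeAvg t₀ T (fun t => sumQ fun q =>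
                    ENNReal.ofReal (((2:ℝ) ^ q) ^ 2 * eu q t)) /
                ENNReal.ofReal ν ^ 3) ^ (1 / (1 + δu)))) ∧
          (timeAvg t₀ T (fun t => LambdaB L c μ r δ (fun q => ab q t) (fun q => Gb q t)) ≤
            1 + ENNReal.ofReal C *
              ((ENNReal.ofReal μ *
                  timeAvg t₀ T (fun t => sumQ fun q =>
                    ENNReal.ofReal (((2:ℝ) ^ q) ^ 2 * eb q t)) /
                ENNReal.ofReal μ ^ 3) ^ (1 / (δb - 1)))) := by
  have hδb2 : 2 < δb := (max_lt_iff.1 hδb1).1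
  have hgapb : 2 * δ + 1 < δb := (max_lt_iff.1 hδb1).2
  set Ku : ℝ := Kconst L c σ CB (3 - δu) with hKu
  set Kb : ℝ := Kconst L c δ CB (3 - δb) with hKb
  have hKu0 : 0 < Ku := Kconst_pos hL hc hCB (by linarith)
  have hKb0 : 0 < Kb := Kconst_pos hL hc hCB (by linarith)
  refine ⟨2 * max (Ku * CI) 1 + 2 * max (Kb * CI) 1, by
    have := le_max_right (Ku * CI) (1:ℝ)
    have := le_max_right (Kb * CI) (1:ℝ)
    linarith, ?_⟩
  intro ν μ T t₀ au Gu ab Gb eu eb hν hμ hT hauM hGuM habM hGbM heuM hebM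
    hau0 hGu0 hab0 hGb0 heu0 heb0 hBernU hBernB hΛuM hΛbM hEu hEb hIu hIb
  have hmaxu := le_max_right (Ku * CI) (1:ℝ)
  have hmaxb := le_max_right (Kb * CI) (1:ℝ)
  constructor
  · -- velocity part
    set Su : ℝ → ℝ≥0∞ := fun t => sumQ fun q =>
      ENNReal.ofReal (((2:ℝ) ^ q) ^ (-1 + δu) * au q t ^ 2) with hSu
    have hSm : Measurable Su := by
      apply Measurable.ennreal_tsum
      intro n
      exact (((hauM ((n:ℤ) - 1) (by omega)).pow_const 2).const_mul _).ennreal_ofReal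
    have hpt : ∀ t ∈ Set.Icc t₀ (t₀ + T),
        LambdaU L c ν σ (fun q => au q t) (fun q => Gu q t) ≤ 1 + 2 *
          (ENNReal.ofReal Ku * Su t / (ENNReal.ofReal ν) ^ 2) ^ ((1 + δu)⁻¹ : ℝ) := by
      intro t ht
      exact aux_pointwiseU L c ν σ δu CB hL hc hν hCB hσ0 hδu1 hδu3
        (fun q => au q t) (fun q => Gu q t)
        (fun qq => hBernU (qq : ℤ) (by omega) t ht)
    have havg := aux_avg t₀ T hT Ku CI ν (1 + δu) hKu0 hCI hν (by linarith)
      Su hSm _ _ hpt hIu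
    have hdiv : ENNReal.ofReal ν * timeAvg t₀ T (fun t => sumQ fun q =>
          ENNReal.ofReal (((2:ℝ) ^ q) ^ 2 * eu q t)) / ENNReal.ofReal ν ^ 3 =
        timeAvg t₀ T (fun t => sumQ fun q =>
          ENNReal.ofReal (((2:ℝ) ^ q) ^ 2 * eu q t)) / (ENNReal.ofReal ν) ^ 2 := by
      rw [pow_succ', ENNReal.mul_div_mul_left _ _ (ENNReal.ofReal_pos.2 hν).ne'
        ENNReal.ofReal_ne_top]
    rw [hdiv, one_div]
    refine havg.trans ?_
    apply add_le_add_right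
    apply mul_le_mul_left
    apply ENNReal.ofReal_le_ofReal
    linarith
  · -- magnetic part
    set Sb : ℝ → ℝ≥0∞ := fun t => sumQ fun q =>
      ENNReal.ofReal (((2:ℝ) ^ q) ^ (-1 + δb + 6 / r) * ab q t ^ 2) with hSb
    have hSm : Measurable Sb := by
      apply Measurable.ennreal_tsum
      intro n
      exact (((habM ((n:ℤ) - 1) (by omega)).pow_const 2).const_mul _).ennreal_ofReal
    have hpt : ∀ t ∈ Set.Icc t₀ (t₀ + T),
        LambdaB L c μ r δ (fun q => ab q t) (fun q => Gb q t) ≤ 1 + 2 *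
          (ENNReal.ofReal Kb * Sb t / (ENNReal.ofReal μ) ^ 2) ^ ((δb - 1)⁻¹ : ℝ) := by
      intro t ht
      exact aux_pointwiseB L c μ r δ δb CB hL hc hμ hCB hr hδ0 hgapb hδb2 hδb3
        (fun q => ab q t) (fun q => Gb q t)
        (fun qq => hBernB (qq : ℤ) (by omega) t ht)
    have havg := aux_avg t₀ T hT Kb CI μ (δb - 1) hKb0 hCI hμ (by linarith)
      Sb hSm _ _ hpt hIb
    have hdiv : ENNReal.ofReal μ * timeAvg t₀ T (fun t => sumQ fun q =>
          ENNReal.ofReal (((2:ℝ) ^ q) ^ 2 * eb q t)) / ENNReal.ofReal μ ^ 3 =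
        timeAvg t₀ T (fun t => sumQ fun q =>
          ENNReal.ofReal (((2:ℝ) ^ q) ^ 2 * eb q t)) / (ENNReal.ofReal μ) ^ 2 := by
      rw [pow_succ', ENNReal.mul_div_mul_left _ _ (ENNReal.ofReal_pos.2 hμ).ne'
        ENNReal.ofReal_ne_top]
    rw [hdiv, one_div]
    refine havg.trans ?_
    apply add_le_add_right
    apply mul_le_mul_left
    apply ENNReal.ofReal_le_ofReal
    linarith
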